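/- arXiv:1907.07915 — 2 statements merged into one kernel-verified Lean document; each statement's English description precedes it below -/
import Mathlib

section
/- Define G: R → R by G(x) = (cos(x) − cos(2x))/(π x²) (extended continuously at 0). Then the Fourier transform of G is FG(ξ) = ξ+2 for ξ ∈ [−2,−1], FG(ξ) = 1 for ξ ∈ [−1,1], FG(ξ) = 2−ξ for ξ ∈ [1,2], and FG(ξ) = 0 otherwise. In particular G is integrable, FG is supported on [−2,2], 0 ≤ FG ≤ 1, and FG = 1 on [−1,1]. -/
open MeasureTheory Real Set

/-- The flat-top kernel `G(x) = (cos x − cos 2x)/(π x²)` (extended continuously at `0`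
by its limit `3/(2π)`). -/
noncomputable def flatTopKernel (x : ℝ) : ℝ :=
  if x = 0 then 3 / (2 * Real.pi) else (Real.cos x - Real.cos (2 * x)) / (Real.pi * x ^ 2)


noncomputable def trapC (ξ : ℝ) : ℂ := ((min 1 (max 0 (2 - |ξ|)) : ℝ) : ℂ)

lemma trap_eq (ξ : ℝ) : trapC ξ =
    if ξ ∈ Icc (-2 : ℝ) (-1) then (ξ : ℂ) + 2
    else if ξ ∈ Icc (-1 : ℝ) 1 then 1
    else if ξ ∈ Icc (1 : ℝ) 2 then 2 - (ξ : ℂ)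
    else 0 := by
  unfold trapC
  split_ifs with h1 h2 h3
  · obtain ⟨ha, hb⟩ := h1
    rw [abs_of_nonpos (by linarith), max_eq_right (by linarith), min_eq_right (by linarith)]
    push_cast; ring
  · obtain ⟨ha, hb⟩ := h2
    rcases le_or_gt 0 ξ with h | h
    · rw [abs_of_nonneg h, max_eq_right (by linarith), min_eq_left (by linarith)]; norm_num
    · rw [abs_of_neg h, max_eq_right (by linarith), min_eq_left (by linarith)]; norm_num
  · obtain ⟨ha, hb⟩ := h3
    rw [abs_of_nonneg (by linarith), max_eq_right (by linarith), min_eq_right (by linarith)]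
    push_cast; ring
  · simp only [mem_Icc, not_and_or, not_le] at h1 h2 h3
    rcases le_or_gt 2 (|ξ|) with h | h
    · rw [max_eq_left (by linarith)]; norm_num
    · exfalso
      rcases abs_lt.1 h with ⟨hl, hr⟩
      rcases le_or_gt ξ (-1) with h4 | h4
      · rcases h1 with h1 | h1 <;> linarith
      · rcases le_or_gt ξ 1 with h5 | h5
        · rcases h2 with h2 | h2 <;> linarith
        · rcases h3 with h3 | h3 <;> linarith

lemma cos_diff_le (x : ℝ) : |Real.cos x - Real.cos (2 * x)| ≤ 2 * x ^ 2 := by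
  rw [abs_le]
  constructor
  · have h := Real.one_sub_sq_div_two_le_cos (x := x)
    have h2 := Real.cos_le_one (2 * x)
    nlinarith
  · have h := Real.one_sub_sq_div_two_le_cos (x := 2 * x)
    have h2 := Real.cos_le_one x
    nlinarith

lemma cos_diff_le' (x : ℝ) : |Real.cos x - Real.cos (2 * x)| ≤ 2 := by
  have h1 := Real.neg_one_le_cos x
  have h2 := Real.cos_le_one x
  have h3 := Real.neg_one_le_cos (2 * x)
  have h4 := Real.cos_le_one (2 * x)
  rw [abs_le]; constructor <;> linarith

lemma G_meas : Measurable flatTopKernel := by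
  unfold flatTopKernel
  exact Measurable.ite (measurableSet_singleton 0) measurable_const (by fun_prop)

lemma G_bound (x : ℝ) : ‖flatTopKernel x‖ ≤ (4 / π) * ‖(1 + x ^ 2)⁻¹‖ := by
  have hπ : (0:ℝ) < π := Real.pi_pos
  have hx2 : (0:ℝ) < 1 + x ^ 2 := by positivity
  rw [Real.norm_eq_abs, Real.norm_eq_abs, abs_of_pos (by positivity : (0:ℝ) < (1 + x^2)⁻¹)]
  unfold flatTopKernel
  split_ifs with h
  · subst h
    rw [abs_of_pos (by positivity)]
    rw [div_le_iff₀ (by positivity), inv_eq_one_div]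
    have : (4:ℝ) / π * (1 / (1 + 0 ^ 2)) * (2 * π) = 8 * (π / π) := by ring
    rw [this, div_self hπ.ne']; norm_num
  · have hx : (0:ℝ) < x ^ 2 := by positivity
    rw [abs_div, abs_of_pos (by positivity : (0:ℝ) < π * x ^ 2)]
    rw [div_le_iff₀ (by positivity)]
    have : (4:ℝ) / π * (1 + x ^ 2)⁻¹ * (π * x ^ 2) = 4 * x ^ 2 * (1 + x ^ 2)⁻¹ * (π / π) := by ring
    rw [this, div_self hπ.ne', mul_one, inv_eq_one_div, ← mul_div_assoc, le_div_iff₀ hx2]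
    have h1 := cos_diff_le x
    have h2 := cos_diff_le' x
    rcases le_or_gt (x ^ 2) 1 with hc | hc
    · nlinarith
    · nlinarith

lemma G_integrable : Integrable flatTopKernel := by
  apply Integrable.mono' (integrable_inv_one_add_sq.const_mul (4 / π))
    G_meas.aestronglyMeasurable
  filter_upwards with x
  simpa [norm_mul, Real.norm_eq_abs, abs_of_pos (by positivity : (0:ℝ) < 4/π), abs_of_pos (by positivity : (0:ℝ) < 1 + x^2)] using G_bound x

section
open Complex FourierTransform

lemma trapC_cont : Continuous trapC := by
  apply Complex.continuous_ofReal.comp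
  exact (continuous_const.min (continuous_const.max (by continuity)))

lemma linexp_deriv {c : ℂ} (hc : c ≠ 0) (a b : ℂ) (t : ℝ) :
    HasDerivAt (fun s : ℝ => ((a * s + b) / c - a / c ^ 2) * Complex.exp (c * s))
      ((a * t + b) * Complex.exp (c * t)) t := by
  have H : HasDerivAt (fun z : ℂ => ((a * z + b) / c - a / c ^ 2) * Complex.exp (c * z))
      ((a * (t:ℂ) + b) * Complex.exp (c * t)) (t : ℂ) := by
    have h1 : HasDerivAt (fun z : ℂ => c * z) c (t:ℂ) := by
      simpa using (hasDerivAt_id (t:ℂ)).const_mul c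
    have he := h1.cexp
    have hl : HasDerivAt (fun z : ℂ => (a * z + b) / c - a / c ^ 2) (a / c) (t:ℂ) :=
      by simpa using ((((hasDerivAt_id (t:ℂ)).const_mul a).add_const b).div_const c).sub_const (a / c ^ 2)
    have := hl.mul he
    refine this.congr_deriv ?_
    field_simp
    ring
  exact H.comp_ofReal

lemma linexp_integral {c : ℂ} (hc : c ≠ 0) (a b : ℂ) (u v : ℝ) :
    (∫ t in u..v, (a * t + b) * Complex.exp (c * t)) =
      ((a * v + b) / c - a / c ^ 2) * Complex.exp (c * v) -
      ((a * u + b) / c - a / c ^ 2) * Complex.exp (c * u) := by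
  exact intervalIntegral.integral_eq_sub_of_hasDerivAt
    (fun t _ => linexp_deriv hc a b t)
    ((Continuous.intervalIntegrable (by fun_prop) u v))

lemma lin_integral (a b : ℂ) (u v : ℝ) :
    (∫ t in u..v, (a * t + b)) =
      (a * v ^ 2 / 2 + b * v) - (a * u ^ 2 / 2 + b * u) := by
  have : ∀ t : ℝ, HasDerivAt (fun s : ℝ => a * s ^ 2 / 2 + b * s) (a * t + b) t := by
    intro t
    have H : HasDerivAt (fun z : ℂ => a * z ^ 2 / 2 + b * z) (a * (t:ℂ) + b) (t:ℂ) := by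
      have h1 : HasDerivAt (fun z : ℂ => z ^ 2) (2 * (t:ℂ)) (t:ℂ) := by
        simpa using hasDerivAt_pow 2 (t:ℂ)
      have := ((h1.const_mul a).div_const 2).add ((hasDerivAt_id _).const_mul b)
      refine this.congr_deriv ?_
      ring
    exact H.comp_ofReal
  rw [intervalIntegral.integral_eq_sub_of_hasDerivAt (fun t _ => this t)
    ((Continuous.intervalIntegrable (by fun_prop) u v))]

lemma trapC_zero {v : ℝ} (hv : v ∉ Ioc (-2:ℝ) 2) : trapC v = 0 := by
  have : 2 ≤ |v| := by
    simp only [mem_Ioc, not_and_or, not_lt, not_le] at hv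
    rcases hv with h | h
    · rw [abs_of_nonpos (by linarith)]; linarith
    · rw [abs_of_pos (by linarith)]; linarith
  unfold trapC
  rw [max_eq_left (by linarith), min_eq_right (by norm_num)]
  norm_num

lemma trapC_eval1 {t : ℝ} (ht : t ∈ Icc (-2:ℝ) (-1)) : trapC t = ((t+2 : ℝ) : ℂ) := by
  obtain ⟨ha, hb⟩ := ht
  unfold trapC
  have : min 1 (max 0 (2 - |t|)) = t + 2 := by
    rw [abs_of_nonpos (by linarith), max_eq_right (by linarith), min_eq_right (by linarith)]
    ring
  rw [this]

lemma trapC_eval2 {t : ℝ} (ht : t ∈ Icc (-1:ℝ) 1) : trapC t = 1 := by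
  obtain ⟨ha, hb⟩ := ht
  have : |t| ≤ 1 := abs_le.2 ⟨ha, hb⟩
  unfold trapC
  rw [max_eq_right (by linarith [abs_nonneg t]), min_eq_left (by linarith)]
  norm_num

lemma trapC_eval3 {t : ℝ} (ht : t ∈ Icc (1:ℝ) 2) : trapC t = ((2 - t : ℝ) : ℂ) := by
  obtain ⟨ha, hb⟩ := ht
  unfold trapC
  have : min 1 (max 0 (2 - |t|)) = 2 - t := by
    rw [_root_.abs_of_nonneg (by linarith), max_eq_right (by linarith), min_eq_right (by linarith)]
  rw [this]

lemma fourier_trap (x : ℝ) :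
    𝓕 trapC x = (2 * π) * ((flatTopKernel (2 * π * x) : ℝ) : ℂ) := by
  rw [Real.fourier_real_eq_integral_exp_smul]
  set ω : ℝ := 2 * π * x with hω
  set c : ℂ := -(ω : ℂ) * Complex.I with hc
  have hint : (∫ v : ℝ, Complex.exp (↑(-2 * π * v * x) * Complex.I) • trapC v) =
      ∫ v : ℝ, Complex.exp (c * v) * trapC v := by
    congr 1; funext v
    rw [smul_eq_mul]
    congr 2
    rw [hc, hω]; push_cast; ring
  rw [hint]
  set h : ℝ → ℂ := fun v => Complex.exp (c * v) * trapC v with hh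
  have hcont : Continuous h := by
    apply Continuous.mul _ trapC_cont
    fun_prop
  have hsupp : Function.support h ⊆ Ioc (-2:ℝ) 2 := by
    intro v hv
    by_contra hmem
    exact hv (by rw [hh]; simp [trapC_zero hmem])
  rw [← intervalIntegral.integral_eq_integral_of_support_subset hsupp]
  have i1 : IntervalIntegrable h volume (-2) (-1) := hcont.intervalIntegrable _ _
  have i2 : IntervalIntegrable h volume (-1) 1 := hcont.intervalIntegrable _ _
  have i3 : IntervalIntegrable h volume 1 2 := hcont.intervalIntegrable _ _
  have A := intervalIntegral.integral_add_adjacent_intervals i1 i2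
  have B := intervalIntegral.integral_add_adjacent_intervals (i1.trans i2) i3
  have split : (∫ t in (-2:ℝ)..2, h t) =
      (∫ t in (-2:ℝ)..(-1), h t) + (∫ t in (-1:ℝ)..1, h t) + ∫ t in (1:ℝ)..2, h t := by
    rw [← B, ← A]
  rw [split]
  have e1 : (∫ t in (-2:ℝ)..(-1), h t) = ∫ t in (-2:ℝ)..(-1), (1 * t + 2) * Complex.exp (c * t) := by
    apply intervalIntegral.integral_congr
    intro t ht
    rw [uIcc_of_le (by norm_num)] at ht
    rw [hh]; simp only
    rw [trapC_eval1 ht]; push_cast; ring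
  have e2 : (∫ t in (-1:ℝ)..1, h t) = ∫ t in (-1:ℝ)..1, (0 * t + 1) * Complex.exp (c * t) := by
    apply intervalIntegral.integral_congr
    intro t ht
    rw [uIcc_of_le (by norm_num)] at ht
    rw [hh]; simp only
    rw [trapC_eval2 ht]; push_cast; ring
  have e3 : (∫ t in (1:ℝ)..2, h t) = ∫ t in (1:ℝ)..2, ((-1) * t + 2) * Complex.exp (c * t) := by
    apply intervalIntegral.integral_congr
    intro t ht
    rw [uIcc_of_le (by norm_num)] at ht
    rw [hh]; simp only
    rw [trapC_eval3 ht]; push_cast; ring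
  rw [e1, e2, e3]
  rcases eq_or_ne x 0 with rfl | hx
  · have hc0 : c = 0 := by rw [hc, hω]; push_cast; ring
    simp only [hc0, zero_mul, Complex.exp_zero, mul_one, zero_add]
    rw [lin_integral, lin_integral, intervalIntegral.integral_const]
    have : flatTopKernel (2 * π * 0) = 3 / (2 * π) := by
      rw [mul_zero]; unfold flatTopKernel; simp
    rw [this]
    have hπ : (π:ℂ) ≠ 0 := Complex.ofReal_ne_zero.2 Real.pi_ne_zero
    push_cast
    field_simp
    ring_nf
    norm_num [Complex.real_smul]
  · have hωne : ω ≠ 0 := by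
      rw [hω]
      exact mul_ne_zero (mul_ne_zero two_ne_zero Real.pi_ne_zero) hx
    have hωC : (ω:ℂ) ≠ 0 := Complex.ofReal_ne_zero.2 hωne
    have hcne : c ≠ 0 := by
      rw [hc]
      exact mul_ne_zero (neg_ne_zero.2 hωC) Complex.I_ne_zero
    rw [linexp_integral hcne, linexp_integral hcne, linexp_integral hcne]
    have hG : flatTopKernel (2 * π * x) =
        (Real.cos ω - Real.cos (2 * ω)) / (π * ω ^ 2) := by
      unfold flatTopKernel
      rw [if_neg (by rw[← hω]; exact hωne), ← hω]
    rw [hG]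
    have ecos1 : ((Real.cos ω : ℝ) : ℂ) =
        (Complex.exp ((ω:ℂ) * Complex.I) + Complex.exp (-((ω:ℂ) * Complex.I))) / 2 := by
      rw [Complex.ofReal_cos]
      have := Complex.two_cos (x := (ω:ℂ))
      rw [neg_mul] at this
      linear_combination this / 2
    have ecos2 : ((Real.cos (2 * ω) : ℝ) : ℂ) =
        (Complex.exp (2 * ((ω:ℂ) * Complex.I)) + Complex.exp (-(2 * ((ω:ℂ) * Complex.I)))) / 2 := by
      rw [Complex.ofReal_cos]
      have := Complex.two_cos (x := 2 * (ω:ℂ))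
      rw [neg_mul, mul_assoc] at this
      push_cast
      linear_combination this / 2
    have E1 : c * ((-1:ℝ):ℂ) = (ω:ℂ) * Complex.I := by rw [hc]; push_cast; ring
    have E2 : c * ((-2:ℝ):ℂ) = 2 * ((ω:ℂ) * Complex.I) := by rw [hc]; push_cast; ring
    have E3 : c * ((1:ℝ):ℂ) = -((ω:ℂ) * Complex.I) := by rw [hc]; push_cast; ring
    have E4 : c * ((2:ℝ):ℂ) = -(2 * ((ω:ℂ) * Complex.I)) := by rw [hc]; push_cast; ring
    rw [E1, E2, E3, E4]
    push_cast [ecos1, ecos2]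
    rw [hc]
    have hπ : (π:ℂ) ≠ 0 := Complex.ofReal_ne_zero.2 Real.pi_ne_zero
    have hI := Complex.I_sq
    have h2 : Complex.I ^ 2 = -1 := Complex.I_sq
    have h3 : Complex.I ^ 3 = -Complex.I := by rw [pow_succ, h2]; ring
    have h4 : Complex.I ^ 4 = 1 := by rw [pow_succ, h3]; simp [Complex.I_mul_I]
    have h5 : Complex.I ^ 5 = Complex.I := by rw [pow_succ, h4]; ring
    have h6 : Complex.I ^ 6 = -1 := by rw [pow_succ, h5]; simp [Complex.I_mul_I]
    have h7 : Complex.I ^ 7 = -Complex.I := by rw [pow_succ, h6]; ring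
    have h8 : Complex.I ^ 8 = 1 := by rw [pow_succ, h7]; simp [Complex.I_mul_I]
    have h9 : Complex.I ^ 9 = Complex.I := by rw [pow_succ, h8]; ring
    have h10 : Complex.I ^ 10 = -1 := by rw [pow_succ, h9]; simp [Complex.I_mul_I]
    have h11 : Complex.I ^ 11 = -Complex.I := by rw [pow_succ, h10]; ring
    have h12 : Complex.I ^ 12 = 1 := by rw [pow_succ, h11]; simp [Complex.I_mul_I]
    field_simp [hωC]
    ring_nf
    try simp only [Complex.inv_I, h2, h3, h4, h5, h6, h7, h8, h9, h10, h11, h12]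
    have hxC : (x:ℂ) ≠ 0 := Complex.ofReal_ne_zero.2 hx
    field_simp [hπ, hxC]
    ring_nf
    try simp only [Complex.inv_I, h2, h3, h4, h5, h6, h7, h8, h9, h10, h11, h12]
    try ring_nf

lemma trapC_integrable : Integrable trapC := by
  apply trapC_cont.integrable_of_hasCompactSupport
  apply HasCompactSupport.intro (isCompact_Icc (a := (-2:ℝ)) (b := 2))
  intro x hx
  apply trapC_zero
  simp only [mem_Icc, not_and_or, not_le] at hx
  simp only [mem_Ioc, not_and_or, not_lt, not_le]
  rcases hx with h | h
  · exact Or.inl (le_of_lt h)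
  · exact Or.inr h

lemma fourier_trap_integrable : Integrable (𝓕 trapC) := by
  have : 𝓕 trapC = fun x => (2 * π : ℂ) * ((flatTopKernel (2 * π * x) : ℝ) : ℂ) := by
    funext x; rw [fourier_trap x]
  rw [this]
  have h2π : (2 * π : ℝ) ≠ 0 := mul_ne_zero two_ne_zero Real.pi_ne_zero
  have := (G_integrable.ofReal (𝕜 := ℂ)).comp_mul_left' h2π
  exact this.const_mul _


/-- The Fourier transform `FG(ξ) = ∫ G(y) exp(iyξ) dy` of the flat-top kernel equals the
trapezoid function: `ξ + 2` on `[−2,−1]`, `1` on `[−1,1]`, `2 − ξ` on `[1,2]`, and `0`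
otherwise.  In particular `G` is integrable, `FG` is supported on `[−2,2]`,
`0 ≤ FG ≤ 1` and `FG = 1` on `[−1,1]`. -/
theorem flatTopKernel_fourier :
    Integrable flatTopKernel ∧
    ∀ ξ : ℝ, (∫ y : ℝ, (flatTopKernel y : ℂ) * Complex.exp (Complex.I * y * ξ)) =
      if ξ ∈ Icc (-2 : ℝ) (-1) then (ξ : ℂ) + 2
      else if ξ ∈ Icc (-1 : ℝ) 1 then 1
      else if ξ ∈ Icc (1 : ℝ) 2 then 2 - (ξ : ℂ)
      else 0 := by

  refine ⟨G_integrable, fun ξ => ?_⟩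
  rw [← trap_eq]
  have hinv := trapC_cont.fourierInv_fourier_eq trapC_integrable fourier_trap_integrable
  conv_rhs => rw [← hinv]
  rw [Real.fourierInv_eq_fourier_neg,
    Real.fourier_real_eq_integral_exp_smul]
  set g : ℝ → ℂ := fun u => (flatTopKernel u : ℂ) * Complex.exp (Complex.I * u * ξ) with hg
  have key : (∫ v : ℝ, Complex.exp (↑(-2 * π * v * -ξ) * Complex.I) • 𝓕 trapC v) =
      ∫ v : ℝ, (2 * π : ℂ) * g (2 * π * v) := by
    congr 1; funext v
    rw [smul_eq_mul, fourier_trap v, hg]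
    simp only
    push_cast
    rw [show (-2 * (π:ℂ) * (v:ℂ) * -(ξ:ℂ) * Complex.I) = Complex.I * (2 * (π:ℂ) * (v:ℂ)) * (ξ:ℂ) from by ring]
    ring
  rw [key, MeasureTheory.integral_const_mul, MeasureTheory.Measure.integral_comp_mul_left g (2 * π)]
  have h2π : (0:ℝ) < 2 * π := by positivity
  rw [abs_of_pos (inv_pos.2 h2π), real_smul]
  rw [← mul_assoc]
  have hπC : (2 * (π:ℂ)) ≠ 0 := by
    simp [Complex.ofReal_ne_zero, Real.pi_ne_zero]
  rw [show ((2:ℂ) * ↑π * ↑(2 * π)⁻¹) = 1 from by push_cast; field_simp [hπC], one_mul]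
end
end

section
/- Let f_ε : R^d → [0,∞) be a bounded, uniformly continuous probability density vanishing at infinity, let A and B be d×d matrices with B nonsingular, and let Â_n be random matrices with ||Â_n − A||₂ = O_p(1/√n). Fix x₀ > 0. Then sup over ||z||_∞ ≤ x₀ and y ∈ R^d of |f_ε(z + Â_n B^{-1}y) − f_ε(z + A B^{-1}y)| converges to 0 in probability as n → ∞. -/
open MeasureTheory ProbabilityTheory Filter

lemma key_det {E : Type*} [NormedAddCommGroup E] [NormedSpace ℝ E]
    (fε : E → ℝ)
    (hucont : UniformContinuous fε)
    (hvanish : Tendsto fε (cocompact E) (nhds 0))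
    (A B : E →L[ℝ] E)
    (hA : IsUnit A) (hB : IsUnit B) (Rz : ℝ) (hRz : 0 ≤ Rz)
    (δ : ℝ) (hδ : 0 < δ) :
    ∃ η : ℝ, 0 < η ∧ ∀ L : E →L[ℝ] E,
      ‖L - A‖ < η → ∀ z : E, ‖z‖ ≤ Rz →
      ∀ y : E,
        |fε (z + L (Ring.inverse B y)) - fε (z + A (Ring.inverse B y))| ≤ δ / 2 := by
  classical
  set Binv : E →L[ℝ] E := Ring.inverse B with hBinv
  have hBinvUnit : IsUnit Binv := by
    rw [hBinv, ← hB.unit_spec, Ring.inverse_unit]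
    exact (hB.unit⁻¹).isUnit
  set T : E →L[ℝ] E := A * Binv with hT
  have hTunit : IsUnit T := hA.mul hBinvUnit
  set U := hTunit.unit with hU
  set K : ℝ := ‖(↑U⁻¹ : E →L[ℝ] E)‖ + 1 with hK
  have hKpos : 0 < K := by positivity
  have hKle : ∀ w : E, ‖w‖ ≤ K * ‖T w‖ := by
    intro w
    have h1 : (↑U⁻¹ : E →L[ℝ] E) (T w) = w := by
      conv_lhs => rw [← hTunit.unit_spec, ← ContinuousLinearMap.mul_apply,
        U.inv_mul, ContinuousLinearMap.one_apply]
    calc ‖w‖ = ‖(↑U⁻¹ : E →L[ℝ] E) (T w)‖ := by rw [h1]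
      _ ≤ ‖(↑U⁻¹ : E →L[ℝ] E)‖ * ‖T w‖ := ContinuousLinearMap.le_opNorm _ _
      _ ≤ K * ‖T w‖ := by
          have := norm_nonneg (T w)
          nlinarith [norm_nonneg (↑U⁻¹ : E →L[ℝ] E)]
  have hδ4 : 0 < δ / 4 := by linarith
  obtain ⟨ρ, hρ, hρ'⟩ := Metric.uniformContinuous_iff.mp hucont (δ/4) hδ4
  have hball : fε ⁻¹' (Metric.ball 0 (δ/4)) ∈ cocompact E :=
    mem_map.mp (hvanish (Metric.ball_mem_nhds 0 hδ4))
  obtain ⟨t, htc, hts⟩ := mem_cocompact.mp hball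
  obtain ⟨M₀, hM₀⟩ := htc.isBounded.subset_closedBall 0
  set M : ℝ := max M₀ 0 with hM
  have hMvan : ∀ w : E, M < ‖w‖ → |fε w| < δ / 4 := by
    intro w hw
    have hwt : w ∉ t := by
      intro hwt
      have h := hM₀ hwt
      simp only [Metric.mem_closedBall, dist_zero_right] at h
      have : ‖w‖ ≤ M := le_trans h (le_max_left _ _)
      linarith
    have := hts hwt
    simpa [Real.dist_eq] using this
  have hMnn : (0:ℝ) ≤ M := le_max_right _ _
  set R : ℝ := 2 * (M + Rz + 1) * K with hR
  set E1 : ℝ := ‖Binv‖ * R + 1 with hE1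
  have hE1pos : 0 < E1 := by
    have : (0:ℝ) ≤ ‖Binv‖ * R := by
      apply mul_nonneg (norm_nonneg _); positivity
    linarith
  set η₁ : ℝ := ρ / E1 with hη₁
  set η₂ : ℝ := 1 / (2 * (‖Binv‖ * K + 1)) with hη₂
  have hη₁pos : 0 < η₁ := div_pos hρ hE1pos
  have hη₂pos : 0 < η₂ := by
    apply div_pos one_pos
    have : (0:ℝ) ≤ ‖Binv‖ * K := mul_nonneg (norm_nonneg _) hKpos.le
    linarith
  refine ⟨min η₁ η₂, lt_min hη₁pos hη₂pos, ?_⟩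
  intro L hL z hz y
  have hLA := norm_nonneg (L - A)
  have hL1 : ‖L - A‖ < η₁ := lt_of_lt_of_le hL (min_le_left _ _)
  have hL2 : ‖L - A‖ < η₂ := lt_of_lt_of_le hL (min_le_right _ _)
  have hdiff : ∀ v : E, ‖L (Binv v) - A (Binv v)‖ ≤ ‖L - A‖ * (‖Binv‖ * ‖v‖) := by
    intro v
    calc ‖L (Binv v) - A (Binv v)‖ = ‖(L - A) (Binv v)‖ := by
          rw [ContinuousLinearMap.sub_apply]
      _ ≤ ‖L - A‖ * ‖Binv v‖ := ContinuousLinearMap.le_opNorm _ _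
      _ ≤ ‖L - A‖ * (‖Binv‖ * ‖v‖) :=
          mul_le_mul_of_nonneg_left (ContinuousLinearMap.le_opNorm _ _) hLA
  have hTy : A (Binv y) = T y := rfl
  rcases le_or_gt ‖y‖ R with hy | hy
  · -- near case : uniform continuity
    have hclose : dist (z + L (Binv y)) (z + A (Binv y)) < ρ := by
      rw [dist_eq_norm]
      have h1 : z + L (Binv y) - (z + A (Binv y)) = L (Binv y) - A (Binv y) := by abel
      rw [h1]
      calc ‖L (Binv y) - A (Binv y)‖ ≤ ‖L - A‖ * (‖Binv‖ * ‖y‖) := hdiff y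
        _ ≤ ‖L - A‖ * E1 := by
            apply mul_le_mul_of_nonneg_left _ hLA
            rw [hE1]
            have : ‖Binv‖ * ‖y‖ ≤ ‖Binv‖ * R :=
              mul_le_mul_of_nonneg_left hy (norm_nonneg _)
            linarith
        _ < η₁ * E1 := mul_lt_mul_of_pos_right hL1 hE1pos
        _ = ρ := by rw [hη₁]; field_simp
    have := hρ' hclose
    rw [Real.dist_eq] at this
    linarith
  · -- far case : both values small
    have hTybig : 2 * (M + Rz + 1) < ‖T y‖ := by
      have h1 : ‖y‖ ≤ K * ‖T y‖ := hKle y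
      have h2 : R < K * ‖T y‖ := lt_of_lt_of_le hy h1
      rw [hR] at h2
      nlinarith [norm_nonneg (T y)]
    have hsmall1 : |fε (z + A (Binv y))| < δ / 4 := by
      apply hMvan
      rw [hTy]
      have h6 : ‖T y‖ ≤ ‖z + T y‖ + ‖z‖ := by
        calc ‖T y‖ = ‖(z + T y) - z‖ := by rw [add_sub_cancel_left]
          _ ≤ ‖z + T y‖ + ‖z‖ := norm_sub_le _ _
      linarith
    have hpert : ‖L (Binv y) - A (Binv y)‖ ≤ ‖T y‖ / 2 := by
      calc ‖L (Binv y) - A (Binv y)‖ ≤ ‖L - A‖ * (‖Binv‖ * ‖y‖) := hdiff y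
        _ ≤ η₂ * (‖Binv‖ * (K * ‖T y‖)) := by
            apply mul_le_mul hL2.le
            · exact mul_le_mul_of_nonneg_left (hKle y) (norm_nonneg _)
            · positivity
            · exact hη₂pos.le
        _ ≤ ‖T y‖ / 2 := by
            rw [hη₂, div_mul_eq_mul_div, one_mul,
              div_le_div_iff₀ (by positivity) two_pos]
            nlinarith [norm_nonneg (T y), norm_nonneg Binv, hKpos]
    have hsmall2 : |fε (z + L (Binv y))| < δ / 4 := by
      apply hMvan
      have h1 : ‖T y‖ ≤ ‖L (Binv y)‖ + ‖L (Binv y) - A (Binv y)‖ := by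
        calc ‖T y‖ = ‖L (Binv y) - (L (Binv y) - A (Binv y))‖ := by
              rw [hTy.symm]; congr 1; abel
          _ ≤ ‖L (Binv y)‖ + ‖L (Binv y) - A (Binv y)‖ := norm_sub_le _ _
      have h6 : ‖L (Binv y)‖ ≤ ‖z + L (Binv y)‖ + ‖z‖ := by
        calc ‖L (Binv y)‖ = ‖(z + L (Binv y)) - z‖ := by rw [add_sub_cancel_left]
          _ ≤ ‖z + L (Binv y)‖ + ‖z‖ := norm_sub_le _ _
      linarith
    calc |fε (z + L (Binv y)) - fε (z + A (Binv y))|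
        ≤ |fε (z + L (Binv y))| + |fε (z + A (Binv y))| := abs_sub _ _
      _ ≤ δ / 2 := by linarith


lemma norm_le_of_coord_le {d : ℕ} (x₀ : ℝ) (z : EuclideanSpace ℝ (Fin d))
    (hz : ∀ i, |z i| ≤ x₀) : ‖z‖ ≤ Real.sqrt (d * x₀ ^ 2) := by
  rw [EuclideanSpace.norm_eq]
  apply Real.sqrt_le_sqrt
  calc ∑ i, ‖z i‖ ^ 2 ≤ ∑ _i : Fin d, x₀ ^ 2 := by
        apply Finset.sum_le_sum
        intro i _
        rw [Real.norm_eq_abs]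
        exact pow_le_pow_left₀ (abs_nonneg _) (hz i) 2
    _ = d * x₀ ^ 2 := by simp [Finset.sum_const, Finset.card_univ, mul_comm]

theorem density_uniform_stability' {d : ℕ}
    {Ω : Type*} [MeasureSpace Ω] [IsProbabilityMeasure (ℙ : Measure Ω)]
    (fε : EuclideanSpace ℝ (Fin d) → ℝ)
    (hbdd : ∃ C : ℝ, ∀ x, fε x ≤ C)
    (hucont : UniformContinuous fε)
    (hvanish : Tendsto fε (cocompact (EuclideanSpace ℝ (Fin d))) (nhds 0))
    (A B : EuclideanSpace ℝ (Fin d) →L[ℝ] EuclideanSpace ℝ (Fin d))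
    (hA : IsUnit A) (hB : IsUnit B)
    (Ahat : ℕ → Ω → (EuclideanSpace ℝ (Fin d) →L[ℝ] EuclideanSpace ℝ (Fin d)))
    (hOp : ∀ δ : ℝ, 0 < δ → ∃ C : ℝ, 0 < C ∧ ∀ n : ℕ, 1 ≤ n →
      ℙ {ω | C / Real.sqrt n ≤ ‖Ahat n ω - A‖} ≤ ENNReal.ofReal δ)
    (x₀ : ℝ) (hx₀ : 0 < x₀) :
    ∀ δ : ℝ, 0 < δ →
      Tendsto (fun n => ℙ {ω |
          δ ≤ ⨆ p : {z : EuclideanSpace ℝ (Fin d) // ∀ i, |z i| ≤ x₀}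
                × EuclideanSpace ℝ (Fin d),
            |fε ((p.1 : EuclideanSpace ℝ (Fin d)) + Ahat n ω (Ring.inverse B p.2))
              - fε ((p.1 : EuclideanSpace ℝ (Fin d)) + A (Ring.inverse B p.2))|})
        atTop (nhds 0) := by
  intro δ hδ
  set Rz : ℝ := Real.sqrt (d * x₀ ^ 2) with hRzdef
  have hRz : 0 ≤ Rz := Real.sqrt_nonneg _
  obtain ⟨η, hη, hkey⟩ := key_det fε hucont hvanish A B hA hB Rz hRz δ hδ
  haveI : Nonempty ({z : EuclideanSpace ℝ (Fin d) // ∀ i, |z i| ≤ x₀}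
      × EuclideanSpace ℝ (Fin d)) :=
    ⟨⟨⟨0, fun i => by simp [hx₀.le]⟩, 0⟩⟩
  -- if the estimate is within η, the sup is below δ
  have hsub : ∀ n : ℕ, ∀ ω : Ω,
      δ ≤ (⨆ p : {z : EuclideanSpace ℝ (Fin d) // ∀ i, |z i| ≤ x₀}
                × EuclideanSpace ℝ (Fin d),
            |fε ((p.1 : EuclideanSpace ℝ (Fin d)) + Ahat n ω (Ring.inverse B p.2))
              - fε ((p.1 : EuclideanSpace ℝ (Fin d)) + A (Ring.inverse B p.2))|) →
      η ≤ ‖Ahat n ω - A‖ := by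
    intro n ω hδle
    by_contra hcon
    push_neg at hcon
    have hsup : (⨆ p : {z : EuclideanSpace ℝ (Fin d) // ∀ i, |z i| ≤ x₀}
                × EuclideanSpace ℝ (Fin d),
            |fε ((p.1 : EuclideanSpace ℝ (Fin d)) + Ahat n ω (Ring.inverse B p.2))
              - fε ((p.1 : EuclideanSpace ℝ (Fin d)) + A (Ring.inverse B p.2))|)
        ≤ δ / 2 := by
      apply ciSup_le
      intro p
      exact hkey (Ahat n ω) hcon (p.1 : EuclideanSpace ℝ (Fin d))
        (norm_le_of_coord_le x₀ _ p.1.2) p.2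
    linarith
  rw [ENNReal.tendsto_atTop_zero]
  intro ε hε
  set ε' : ℝ := (min ε 1).toReal with hε'def
  have hmin_ne : min ε 1 ≠ ⊤ :=
    (lt_of_le_of_lt (min_le_right ε 1) ENNReal.one_lt_top).ne
  have hmin_pos : 0 < min ε 1 := lt_min hε (by norm_num)
  have hε'pos : 0 < ε' := ENNReal.toReal_pos hmin_pos.ne' hmin_ne
  obtain ⟨C, hC, hCbound⟩ := hOp ε' hε'pos
  set N : ℕ := max 1 (⌈(C / η) ^ 2⌉₊ + 1) with hN
  refine ⟨N, fun n hn => ?_⟩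
  have hn1 : 1 ≤ n := le_trans (le_max_left _ _) hn
  have hsqrt : C / Real.sqrt n ≤ η := by
    have hnpos : (0:ℝ) < n := by exact_mod_cast hn1
    have h2 : (C / η) ^ 2 ≤ (n : ℝ) := by
      have : (⌈(C / η) ^ 2⌉₊ + 1 : ℕ) ≤ n := le_trans (le_max_right _ _) hn
      calc (C / η) ^ 2 ≤ (⌈(C / η) ^ 2⌉₊ : ℝ) := Nat.le_ceil _
        _ ≤ ((⌈(C / η) ^ 2⌉₊ + 1 : ℕ) : ℝ) := by push_cast; linarith
        _ ≤ (n : ℝ) := by exact_mod_cast this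
    have h3 : C / η ≤ Real.sqrt n := by
      have := Real.sqrt_le_sqrt h2
      rwa [Real.sqrt_sq (by positivity : (0:ℝ) ≤ C / η)] at this
    have hsn : 0 < Real.sqrt n := Real.sqrt_pos.mpr hnpos
    rw [div_le_iff₀ hsn]
    rw [div_le_iff₀ hη] at h3
    linarith [mul_comm η (Real.sqrt n)]
  calc ℙ {ω | δ ≤ ⨆ p : {z : EuclideanSpace ℝ (Fin d) // ∀ i, |z i| ≤ x₀}
                × EuclideanSpace ℝ (Fin d),
            |fε ((p.1 : EuclideanSpace ℝ (Fin d)) + Ahat n ω (Ring.inverse B p.2))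
              - fε ((p.1 : EuclideanSpace ℝ (Fin d)) + A (Ring.inverse B p.2))|}
      ≤ ℙ {ω | C / Real.sqrt n ≤ ‖Ahat n ω - A‖} := by
        apply measure_mono
        intro ω hω
        exact le_trans hsqrt (hsub n ω hω)
    _ ≤ ENNReal.ofReal ε' := hCbound n hn1
    _ ≤ ε := by
        rw [hε'def, ENNReal.ofReal_toReal hmin_ne]
        exact min_le_left _ _

/-- Uniform stability of a bounded, uniformly continuous density vanishing at infinity
under an `O_p(1/√n)`-consistent estimate of the transition matrix: with `A`, `B`
nonsingular and `‖Â_n − A‖₂ = O_p(1/√n)`,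
`sup_{‖z‖_∞ ≤ x₀, y ∈ ℝ^d} |f_ε(z + Â_nB⁻¹y) − f_ε(z + AB⁻¹y)| →_p 0`. -/
theorem density_uniform_stability {d : ℕ}
    {Ω : Type*} [MeasureSpace Ω] [IsProbabilityMeasure (ℙ : Measure Ω)]
    (fε : EuclideanSpace ℝ (Fin d) → ℝ)
    (hpos : ∀ x, 0 ≤ fε x) (hint : Integrable fε) (hprob : ∫ x, fε x = 1)
    (hbdd : ∃ C : ℝ, ∀ x, fε x ≤ C)
    (hucont : UniformContinuous fε)
    (hvanish : Tendsto fε (cocompact (EuclideanSpace ℝ (Fin d))) (nhds 0))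
    (A B : EuclideanSpace ℝ (Fin d) →L[ℝ] EuclideanSpace ℝ (Fin d))
    (hA : IsUnit A) (hB : IsUnit B)
    (Ahat : ℕ → Ω → (EuclideanSpace ℝ (Fin d) →L[ℝ] EuclideanSpace ℝ (Fin d)))
    (hAmeas : ∀ n, Measurable (Ahat n))
    (hOp : ∀ δ : ℝ, 0 < δ → ∃ C : ℝ, 0 < C ∧ ∀ n : ℕ, 1 ≤ n →
      ℙ {ω | C / Real.sqrt n ≤ ‖Ahat n ω - A‖} ≤ ENNReal.ofReal δ)
    (x₀ : ℝ) (hx₀ : 0 < x₀) :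
    ∀ δ : ℝ, 0 < δ →
      Tendsto (fun n => ℙ {ω |
          δ ≤ ⨆ p : {z : EuclideanSpace ℝ (Fin d) // ∀ i, |z i| ≤ x₀}
                × EuclideanSpace ℝ (Fin d),
            |fε ((p.1 : EuclideanSpace ℝ (Fin d)) + Ahat n ω (Ring.inverse B p.2))
              - fε ((p.1 : EuclideanSpace ℝ (Fin d)) + A (Ring.inverse B p.2))|})
        atTop (nhds 0) := by
  exact density_uniform_stability' fε hbdd hucont hvanish A B hA hB Ahat hOp x₀ hx₀
end
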